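/- For each fixed x ≥ 0 and γ > 0, the central moments of the Baskakov basis satisfy U_{n,m,γ}(x) = O(n^{−⌈(m)/2⌉}) as n → ∞; precisely, there exists C > 0 depending on m, x, γ such that |U_{n,m,γ}(x)| ≤ C·n^{−⌊(m+1)/2⌋} for all sufficiently large n. -/

import Mathlib

open MeasureTheory Filter Real

lemma aux_summable_of_pos_ratio {f : ℕ → ℝ} (hpos : ∀ k, 0 < f k) {l : ℝ} (hl : l < 1)
    (h : Tendsto (fun k => f (k + 1) / f k) atTop (nhds l)) : Summable f := by
  apply summable_of_ratio_test_tendsto_lt_one hl (Eventually.of_forall fun k => (hpos k).ne')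
  have : (fun n => ‖f (n + 1)‖ / ‖f n‖) = fun k => f (k + 1) / f k := by
    funext k
    rw [Real.norm_of_nonneg (hpos _).le, Real.norm_of_nonneg (hpos _).le]
  rw [this]; exact h

lemma aux_tendsto_ratio (r : ℝ) :
    Tendsto (fun k : ℕ => (r + k) / ((k : ℝ) + 1)) atTop (nhds 1) := by
  have h0 := tendsto_one_div_add_atTop_nhds_zero_nat (𝕜 := ℝ)
  have h1 : Tendsto (fun k : ℕ => 1 + (r - 1) * (1 / ((k : ℝ) + 1))) atTop
      (nhds (1 + (r - 1) * 0)) := tendsto_const_nhds.add (h0.const_mul _)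
  simp only [mul_zero, add_zero] at h1
  convert h1 using 2 with k
  have hk : ((k : ℝ) + 1) ≠ 0 := by positivity
  field_simp
  ring

lemma aux_tendsto_pow_ratio (m : ℕ) :
    Tendsto (fun k : ℕ => (((k : ℝ) + 2) / ((k : ℝ) + 1)) ^ m) atTop (nhds 1) := by
  have h := (aux_tendsto_ratio 2).pow m
  simp only [one_pow] at h
  apply h.congr
  intro k
  ring_nf

lemma aux_summable_gamma {r q : ℝ} (hr : 0 < r) (hq0 : 0 < q) (hq1 : q < 1) :
    Summable (fun k : ℕ => q ^ k / (k.factorial : ℝ) * Real.Gamma (r + k)) := by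
  have hpos : ∀ k : ℕ, 0 < q ^ k / (k.factorial : ℝ) * Real.Gamma (r + k) := by
    intro k
    have h1 : (0:ℝ) < k.factorial := by exact_mod_cast k.factorial_pos
    have h2 : 0 < Real.Gamma (r + k) := Real.Gamma_pos_of_pos (by positivity)
    positivity
  apply aux_summable_of_pos_ratio hpos hq1
  have heq : (fun k : ℕ => (q ^ (k+1) / (((k+1 : ℕ)).factorial : ℝ) * Real.Gamma (r + ((k+1:ℕ):ℝ)))
      / (q ^ k / (k.factorial : ℝ) * Real.Gamma (r + k)))
      = fun k : ℕ => q * ((r + k) / ((k : ℝ) + 1)) := by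
    funext k
    have h1 : ((k.factorial : ℝ)) ≠ 0 := by exact_mod_cast k.factorial_pos.ne'
    have h2 : Real.Gamma (r + k) ≠ 0 := (Real.Gamma_pos_of_pos (by positivity)).ne'
    have h3 : r + ((k+1:ℕ):ℝ) = (r + k) + 1 := by push_cast; ring
    have h4 : Real.Gamma ((r + k) + 1) = (r + k) * Real.Gamma (r + k) :=
      Real.Gamma_add_one (by positivity)
    have h5 : ((((k+1:ℕ)).factorial : ℝ)) = ((k:ℝ) + 1) * k.factorial := by
      rw [Nat.factorial_succ]; push_cast; ring
    rw [h3, h4, h5]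
    have hk1 : ((k:ℝ) + 1) ≠ 0 := by positivity
    have hqk : q ^ k ≠ 0 := by positivity
    field_simp
    ring
  rw [heq]
  have := (aux_tendsto_ratio r).const_mul q
  simpa using this

/-- Generalized binomial series -/
lemma aux_binom_sum {r q : ℝ} (hr : 0 < r) (hq0 : 0 < q) (hq1 : q < 1) :
    ∑' k : ℕ, Real.Gamma (r + k) / (Real.Gamma ((k : ℝ) + 1) * Real.Gamma r) * q ^ k
      = (1 - q) ^ (-r) := by
  set f : ℕ → ℝ → ℝ := fun k t => q ^ k / (k.factorial : ℝ) * (Real.exp (-t) * t ^ (r + k - 1))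
    with hf
  have hrk : ∀ k : ℕ, (0:ℝ) < r + k := fun k => by positivity
  have hint : ∀ k : ℕ, IntegrableOn (f k) (Set.Ioi 0) :=
    fun k => (Real.GammaIntegral_convergent (hrk k)).const_mul _
  have hval : ∀ k : ℕ, ∫ t in Set.Ioi 0, f k t = q ^ k / (k.factorial : ℝ) * Real.Gamma (r + k) := by
    intro k
    rw [hf]
    simp only
    rw [MeasureTheory.integral_const_mul, ← Real.Gamma_eq_integral (hrk k)]
  have hnonneg : ∀ k : ℕ, ∀ t ∈ Set.Ioi (0:ℝ), 0 ≤ f k t := by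
    intro k t ht
    have ht' : (0:ℝ) < t := ht
    have h1 : (0:ℝ) < k.factorial := by exact_mod_cast k.factorial_pos
    have h2 : 0 < t ^ (r + k - 1) := Real.rpow_pos_of_pos ht' _
    positivity
  have hsummable := aux_summable_gamma hr hq0 hq1
  have hlint : ∀ k : ℕ, ∫⁻ t in Set.Ioi 0, ‖f k t‖ₑ =
      ENNReal.ofReal (q ^ k / (k.factorial : ℝ) * Real.Gamma (r + k)) := by
    intro k
    rw [← hval k, MeasureTheory.ofReal_integral_eq_lintegral_ofReal (hint k)
      ((ae_restrict_mem measurableSet_Ioi).mono (hnonneg k))]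
    apply lintegral_congr_ae
    filter_upwards [ae_restrict_mem measurableSet_Ioi] with t ht
    exact Real.enorm_eq_ofReal (hnonneg k t ht)
  have hswap : ∫ t in Set.Ioi 0, ∑' k : ℕ, f k t = ∑' k : ℕ, ∫ t in Set.Ioi 0, f k t := by
    apply MeasureTheory.integral_tsum (fun k => (hint k).aestronglyMeasurable)
    simp_rw [hlint]
    rw [← ENNReal.ofReal_tsum_of_nonneg (fun k => by
      have h1 : (0:ℝ) < k.factorial := by exact_mod_cast k.factorial_pos
      have h2 : 0 ≤ Real.Gamma (r + k) := (Real.Gamma_pos_of_pos (hrk k)).le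
      positivity) hsummable]
    exact ENNReal.ofReal_ne_top
  -- pointwise sum
  have hptw : ∀ t ∈ Set.Ioi (0:ℝ), ∑' k : ℕ, f k t = t ^ (r - 1) * Real.exp (-((1 - q) * t)) := by
    intro t ht
    have ht' : (0:ℝ) < t := ht
    have h1 : ∀ k : ℕ, f k t = (Real.exp (-t) * t ^ (r - 1)) * ((q * t) ^ k / (k.factorial : ℝ)) := by
      intro k
      rw [hf]
      simp only
      have : t ^ (r + k - 1) = t ^ (r - 1) * t ^ (k : ℕ) := by
        rw [← Real.rpow_natCast t k, ← Real.rpow_add ht']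
        ring_nf
      rw [this, mul_pow]
      ring
    rw [tsum_congr h1, tsum_mul_left]
    have hexp : ∑' (x : ℕ), (q * t) ^ x / (x.factorial : ℝ) = Real.exp (q * t) := by
      rw [Real.exp_eq_exp_ℝ]
      exact (NormedSpace.expSeries_div_hasSum_exp (q * t)).tsum_eq
    rw [hexp, show -((1 - q) * t) = -t + q * t by ring, Real.exp_add]
    ring
  -- assemble
  have hG : ∀ k : ℕ, Real.Gamma ((k : ℝ) + 1) = (k.factorial : ℝ) :=
    fun k => Real.Gamma_nat_eq_factorial k
  have hterm : ∀ k : ℕ, Real.Gamma (r + k) / (Real.Gamma ((k : ℝ) + 1) * Real.Gamma r) * q ^ k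
      = (Real.Gamma r)⁻¹ * (q ^ k / (k.factorial : ℝ) * Real.Gamma (r + k)) := by
    intro k
    rw [hG k]
    have h1 : ((k.factorial : ℝ)) ≠ 0 := by exact_mod_cast k.factorial_pos.ne'
    have h2 : Real.Gamma r ≠ 0 := (Real.Gamma_pos_of_pos hr).ne'
    field_simp
  rw [tsum_congr hterm, tsum_mul_left]
  have hfin : ∑' k : ℕ, q ^ k / (k.factorial : ℝ) * Real.Gamma (r + k)
      = (1 / (1 - q)) ^ r * Real.Gamma r := by
    rw [← funext hval, ← hswap,
      setIntegral_congr_fun measurableSet_Ioi hptw]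
    exact Real.integral_rpow_mul_exp_neg_mul_Ioi hr (by linarith)
  rw [hfin]
  have h2 : Real.Gamma r ≠ 0 := (Real.Gamma_pos_of_pos hr).ne'
  have h3 : (0:ℝ) < 1 - q := by linarith
  rw [one_div, ← Real.rpow_neg_one (1 - q), ← Real.rpow_mul h3.le, neg_one_mul,
    mul_comm ((1 - q) ^ (-r)), ← mul_assoc, inv_mul_cancel₀ h2, one_mul]

noncomputable def p (n γ : ℝ) (k : ℕ) (x : ℝ) : ℝ :=
  Real.Gamma (n / γ + (k : ℝ)) / (Real.Gamma ((k : ℝ) + 1) * Real.Gamma (n / γ)) *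
    (γ * x) ^ k / (1 + γ * x) ^ (n / γ + (k : ℝ))

noncomputable def U (n : ℝ) (m : ℕ) (γ x : ℝ) : ℝ :=
  ∑' k : ℕ, p n γ k x * ((k : ℝ) / n - x) ^ m

noncomputable def M (n : ℝ) (m : ℕ) (γ x : ℝ) : ℝ :=
  ∑' k : ℕ, p n γ k x * ((k : ℝ) - n * x) ^ m

section main
variable {γ x n : ℝ}

lemma p_nonneg (hγ : 0 < γ) (hx : 0 ≤ x) (hn : 0 < n) (k : ℕ) : 0 ≤ p n γ k x := by
  unfold p
  have hr : 0 < n / γ := div_pos hn hγ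
  have h1 : 0 < Real.Gamma (n / γ + k) := Real.Gamma_pos_of_pos (by positivity)
  have h2 : 0 < Real.Gamma ((k : ℝ) + 1) := Real.Gamma_pos_of_pos (by positivity)
  have h3 : 0 < Real.Gamma (n / γ) := Real.Gamma_pos_of_pos hr
  have h4 : (0:ℝ) < (1 + γ * x) ^ (n / γ + (k : ℝ)) := Real.rpow_pos_of_pos (by positivity) _
  positivity

lemma p_pos (hγ : 0 < γ) (hx : 0 < x) (hn : 0 < n) (k : ℕ) : 0 < p n γ k x := by
  unfold p
  have hr : 0 < n / γ := div_pos hn hγ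
  have h1 : 0 < Real.Gamma (n / γ + k) := Real.Gamma_pos_of_pos (by positivity)
  have h2 : 0 < Real.Gamma ((k : ℝ) + 1) := Real.Gamma_pos_of_pos (by positivity)
  have h3 : 0 < Real.Gamma (n / γ) := Real.Gamma_pos_of_pos hr
  have h4 : (0:ℝ) < (1 + γ * x) ^ (n / γ + (k : ℝ)) := Real.rpow_pos_of_pos (by positivity) _
  positivity

lemma p_succ (hγ : 0 < γ) (hx : 0 ≤ x) (hn : 0 < n) (k : ℕ) :
    p n γ (k+1) x
      = p n γ k x * ((n / γ + k) / ((k : ℝ) + 1)) * (γ * x / (1 + γ * x)) := by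
  unfold p
  have hr : 0 < n / γ := div_pos hn hγ
  have hb : (0:ℝ) < 1 + γ * x := by positivity
  have e1 : (((k+1:ℕ)):ℝ) = (k : ℝ) + 1 := by push_cast; ring
  rw [e1]
  have g1 : Real.Gamma (n / γ + ((k : ℝ) + 1)) = (n / γ + k) * Real.Gamma (n / γ + k) := by
    rw [show n / γ + ((k : ℝ) + 1) = (n / γ + k) + 1 by ring,
      Real.Gamma_add_one (by positivity : (0:ℝ) < n / γ + k).ne']
  have g2 : Real.Gamma (((k : ℝ) + 1) + 1) = ((k : ℝ) + 1) * Real.Gamma ((k : ℝ) + 1) :=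
    Real.Gamma_add_one (by positivity : (0:ℝ) < (k : ℝ) + 1).ne'
  have g4 : (1 + γ * x) ^ (n / γ + ((k : ℝ) + 1))
      = (1 + γ * x) ^ (n / γ + (k : ℝ)) * (1 + γ * x) := by
    rw [show n / γ + ((k : ℝ) + 1) = (n / γ + (k : ℝ)) + 1 by ring, Real.rpow_add hb,
      Real.rpow_one]
  rw [g1, g2, g4, pow_succ]
  have h2 : Real.Gamma ((k : ℝ) + 1) ≠ 0 := (Real.Gamma_pos_of_pos (by positivity)).ne'
  have h3 : Real.Gamma (n / γ) ≠ 0 := (Real.Gamma_pos_of_pos hr).ne'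
  have h4 : (1 + γ * x) ^ (n / γ + (k : ℝ)) ≠ 0 := (Real.rpow_pos_of_pos hb _).ne'
  have h5 : ((k : ℝ) + 1) ≠ 0 := by positivity
  field_simp

lemma p_succ_mul (hγ : 0 < γ) (hx : 0 ≤ x) (hn : 0 < n) (k : ℕ) :
    ((k : ℝ) + 1) * p n γ (k+1) x
      = (γ * x / (1 + γ * x)) * ((n / γ + k) * p n γ k x) := by
  rw [p_succ hγ hx hn k]
  have h5 : ((k : ℝ) + 1) ≠ 0 := by positivity
  field_simp

lemma summable_p_mul_weight (hγ : 0 < γ) (hx : 0 ≤ x) (hn : 0 < n) {g : ℕ → ℝ} {c : ℝ} {m : ℕ}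
    (hg : ∀ k, |g k| ≤ c * ((k : ℝ) + 1) ^ m) : Summable (fun k => p n γ k x * g k) := by
  have base : Summable (fun k => p n γ k x * ((k : ℝ) + 1) ^ m) := by
    rcases eq_or_lt_of_le hx with h0 | hxp
    · apply summable_of_ne_finset_zero (s := ({0} : Finset ℕ))
      intro k hk
      have hk0 : k ≠ 0 := by simpa using hk
      have hz : (γ * x) ^ k = 0 := by rw [← h0, mul_zero, zero_pow hk0]
      unfold p; rw [hz]; simp
    · have hb : (0:ℝ) < 1 + γ * x := by positivity
      have hq1 : γ * x / (1 + γ * x) < 1 := by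
        rw [div_lt_one hb]; linarith
      apply aux_summable_of_pos_ratio
        (fun k => mul_pos (p_pos hγ hxp hn k) (by positivity)) hq1
      have heq : (fun k : ℕ => (p n γ (k+1) x * ((((k+1):ℕ):ℝ) + 1) ^ m)
          / (p n γ k x * ((k : ℝ) + 1) ^ m))
          = fun k : ℕ => (γ * x / (1 + γ * x)) * ((n / γ + k) / ((k : ℝ) + 1))
              * ((((k : ℝ) + 2) / ((k : ℝ) + 1)) ^ m) := by
        funext k
        have e1 : ((((k+1):ℕ)):ℝ) + 1 = (k : ℝ) + 2 := by push_cast; ring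
        rw [e1, p_succ hγ hx hn k, div_pow]
        have h1 : p n γ k x ≠ 0 := (p_pos hγ hxp hn k).ne'
        have h5 : ((k : ℝ) + 1) ≠ 0 := by positivity
        have h6 : ((k : ℝ) + 2) ≠ 0 := by positivity
        field_simp
      rw [heq]
      have ht := ((aux_tendsto_ratio (n / γ)).const_mul (γ * x / (1 + γ * x))).mul
        (aux_tendsto_pow_ratio m)
      simpa using ht
  apply Summable.of_norm
  refine Summable.of_nonneg_of_le (fun k => norm_nonneg _) (fun k => ?_) (base.mul_left c)
  · rw [Real.norm_eq_abs, abs_mul, abs_of_nonneg (p_nonneg hγ hx hn k)]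
    calc p n γ k x * |g k| ≤ p n γ k x * (c * ((k : ℝ) + 1) ^ m) :=
          mul_le_mul_of_nonneg_left (hg k) (p_nonneg hγ hx hn k)
      _ = c * (p n γ k x * ((k : ℝ) + 1) ^ m) := by ring

lemma abs_sub_pow_le (c : ℝ) (m : ℕ) (k : ℕ) :
    |((k : ℝ) - c) ^ m| ≤ (1 + |c|) ^ m * ((k : ℝ) + 1) ^ m := by
  rw [abs_pow, ← mul_pow]
  apply pow_le_pow_left₀ (abs_nonneg _)
  have h1 : |(k : ℝ) - c| ≤ (k : ℝ) + |c| := by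
    calc |(k : ℝ) - c| ≤ |(k : ℝ)| + |c| := abs_sub _ _
      _ = (k : ℝ) + |c| := by rw [Nat.abs_cast]
  have h2 : (0:ℝ) ≤ (k : ℝ) := Nat.cast_nonneg k
  have h3 : (0:ℝ) ≤ |c| := abs_nonneg c
  nlinarith

lemma S1 (hγ : 0 < γ) (hx : 0 ≤ x) (hn : 0 < n) (m : ℕ) (c : ℝ) :
    Summable (fun k => p n γ k x * ((k : ℝ) - c) ^ m) :=
  summable_p_mul_weight hγ hx hn (fun k => abs_sub_pow_le c m k)

lemma S2 (hγ : 0 < γ) (hx : 0 ≤ x) (hn : 0 < n) (m : ℕ) (c : ℝ) :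
    Summable (fun k : ℕ => (n / γ + k) * (p n γ k x * ((k : ℝ) - c) ^ m)) := by
  have hr : 0 < n / γ := div_pos hn hγ
  have := summable_p_mul_weight hγ hx hn
    (g := fun k => (n / γ + k) * ((k : ℝ) - c) ^ m)
    (c := (n / γ + 1) * ((1 + |c|) ^ m)) (m := m + 1) ?_
  · refine Summable.congr this (fun k => ?_)
    ring
  · intro k
    rw [abs_mul, abs_of_nonneg (by positivity : (0:ℝ) ≤ n / γ + k)]
    calc (n / γ + k) * |((k : ℝ) - c) ^ m|
        ≤ ((n / γ + 1) * ((k : ℝ) + 1)) * ((1 + |c|) ^ m * ((k : ℝ) + 1) ^ m) := by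
          apply mul_le_mul ?_ (abs_sub_pow_le c m k) (abs_nonneg _) (by positivity)
          have h2 : (0:ℝ) ≤ (k : ℝ) := Nat.cast_nonneg k
          nlinarith
      _ = (n / γ + 1) * (1 + |c|) ^ m * ((k : ℝ) + 1) ^ (m + 1) := by ring
  
lemma S3 (hγ : 0 < γ) (hx : 0 ≤ x) (hn : 0 < n) (m : ℕ) (c : ℝ) :
    Summable (fun k : ℕ => (k : ℝ) * (p n γ k x * ((k : ℝ) - c) ^ m)) := by
  have := summable_p_mul_weight hγ hx hn
    (g := fun k => (k : ℝ) * ((k : ℝ) - c) ^ m)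
    (c := (1 + |c|) ^ m) (m := m + 1) ?_
  · refine Summable.congr this (fun k => ?_)
    ring
  · intro k
    rw [abs_mul, Nat.abs_cast]
    calc (k : ℝ) * |((k : ℝ) - c) ^ m|
        ≤ ((k : ℝ) + 1) * ((1 + |c|) ^ m * ((k : ℝ) + 1) ^ m) := by
          apply mul_le_mul (by linarith [Nat.cast_nonneg (α := ℝ) k])
            (abs_sub_pow_le c m k) (abs_nonneg _) (by positivity)
      _ = (1 + |c|) ^ m * ((k : ℝ) + 1) ^ (m + 1) := by ring

lemma M_zero (hγ : 0 < γ) (hx : 0 ≤ x) (hn : 0 < n) : M n 0 γ x = 1 := by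
  unfold M
  simp only [pow_zero, mul_one]
  have hr : 0 < n / γ := div_pos hn hγ
  rcases eq_or_lt_of_le hx with h0 | hxp
  · subst h0
    rw [tsum_eq_single 0]
    · unfold p
      simp [Real.Gamma_one, div_self (Real.Gamma_pos_of_pos hr).ne']
    · intro b hb
      unfold p
      rw [mul_zero, zero_pow hb]
      simp
  · have hb : (0:ℝ) < 1 + γ * x := by positivity
    set q : ℝ := γ * x / (1 + γ * x) with hq
    have hq0 : 0 < q := div_pos (by positivity) hb
    have hq1 : q < 1 := by rw [hq, div_lt_one hb]; linarith
    have key : ∀ k : ℕ, p n γ k x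
        = (Real.Gamma (n / γ + k) / (Real.Gamma ((k:ℝ) + 1) * Real.Gamma (n / γ)) * q ^ k)
          * (1 + γ * x) ^ (-(n / γ)) := by
      intro k
      unfold p
      have e1 : (γ * x) ^ k = q ^ k * (1 + γ * x) ^ k := by
        rw [← mul_pow, hq, div_mul_cancel₀ _ hb.ne']
      have e2 : (1 + γ * x) ^ (n / γ + (k:ℝ))
          = (1 + γ * x) ^ (n / γ) * (1 + γ * x) ^ (k:ℕ) := by
        rw [Real.rpow_add hb, Real.rpow_natCast]
      rw [e1, e2, Real.rpow_neg hb.le]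
      have h4 : ((1 + γ * x) ^ (n / γ)) ≠ 0 := (Real.rpow_pos_of_pos hb _).ne'
      have h5 : ((1 + γ * x) ^ (k:ℕ)) ≠ 0 := by positivity
      field_simp
    rw [tsum_congr key, tsum_mul_right, aux_binom_sum hr hq0 hq1]
    have h1q : 1 - q = (1 + γ * x)⁻¹ := by
      rw [hq]
      field_simp
      ring
    rw [h1q, Real.inv_rpow hb.le]
    exact inv_mul_cancel₀ (Real.rpow_pos_of_pos hb _).ne'

lemma M_rec (hγ : 0 < γ) (hx : 0 ≤ x) (hn : 0 < n) (m : ℕ) :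
    M n (m+1) γ x = (1 + γ * x) * ∑ j ∈ Finset.range m, (m.choose j : ℝ) *
      (n * x * M n j γ x + (γ * x / (1 + γ * x)) * M n (j+1) γ x) := by
  have hb : (0:ℝ) < 1 + γ * x := by positivity
  set q : ℝ := γ * x / (1 + γ * x) with hq
  set c : ℝ := n * x with hc
  set r : ℝ := n / γ with hrdef
  have hr : 0 < r := div_pos hn hγ
  -- step 1 : the shift identity
  have key : ∑' k : ℕ, (k : ℝ) * (p n γ k x * ((k : ℝ) - c) ^ m)
      = ∑' k : ℕ, q * ((r + k) * (p n γ k x * (((k : ℝ) - c) + 1) ^ m)) := by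
    rw [Summable.tsum_eq_zero_add (S3 hγ hx hn m c)]
    simp only [Nat.cast_zero, zero_mul, zero_add]
    apply tsum_congr
    intro k
    have e1 : ((k + 1 : ℕ) : ℝ) = (k : ℝ) + 1 := by push_cast; ring
    rw [e1]
    have := p_succ_mul hγ hx hn k
    calc ((k:ℝ) + 1) * (p n γ (k+1) x * (((k:ℝ) + 1) - c) ^ m)
        = (((k:ℝ) + 1) * p n γ (k+1) x) * (((k:ℝ) + 1) - c) ^ m := by ring
      _ = (q * ((r + k) * p n γ k x)) * (((k:ℝ) - c) + 1) ^ m := by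
          rw [this, hq, hrdef]; ring_nf
      _ = q * ((r + k) * (p n γ k x * (((k:ℝ) - c) + 1) ^ m)) := by ring
  -- step 2 : LHS split
  have lhs_split : ∑' k : ℕ, (k : ℝ) * (p n γ k x * ((k : ℝ) - c) ^ m)
      = M n (m+1) γ x + c * M n m γ x := by
    have e : ∀ k : ℕ, (k : ℝ) * (p n γ k x * ((k : ℝ) - c) ^ m)
        = p n γ k x * ((k : ℝ) - c) ^ (m+1) + c * (p n γ k x * ((k : ℝ) - c) ^ m) := by
      intro k
      rw [pow_succ]
      ring
    rw [tsum_congr e, Summable.tsum_add (S1 hγ hx hn (m+1) c) ((S1 hγ hx hn m c).mul_left c),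
      tsum_mul_left]
    rfl
  -- step 3 : RHS expansion
  have rhs_exp : ∑' k : ℕ, q * ((r + k) * (p n γ k x * (((k : ℝ) - c) + 1) ^ m))
      = ∑ j ∈ Finset.range (m+1), (m.choose j : ℝ) *
          (q * ((r + c) * M n j γ x + M n (j+1) γ x)) := by
    have e : ∀ k : ℕ, q * ((r + k) * (p n γ k x * (((k : ℝ) - c) + 1) ^ m))
        = ∑ j ∈ Finset.range (m+1), (m.choose j : ℝ) *
            (q * ((r + k) * (p n γ k x * ((k : ℝ) - c) ^ j))) := by
      intro k
      rw [add_pow]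
      rw [Finset.mul_sum, Finset.mul_sum, Finset.mul_sum]
      apply Finset.sum_congr rfl
      intro j hj
      rw [one_pow]
      ring
    rw [tsum_congr e, Summable.tsum_finsetSum (fun j hj => by
      exact ((S2 hγ hx hn j c).mul_left q).mul_left _)]
    apply Finset.sum_congr rfl
    intro j hj
    rw [tsum_mul_left, tsum_mul_left]
    congr 1
    have e2 : ∀ k : ℕ, (r + k) * (p n γ k x * ((k : ℝ) - c) ^ j)
        = (r + c) * (p n γ k x * ((k : ℝ) - c) ^ j)
          + (p n γ k x * ((k : ℝ) - c) ^ (j+1)) := by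
      intro k
      rw [pow_succ]
      ring
    rw [tsum_congr e2, Summable.tsum_add ((S1 hγ hx hn j c).mul_left _) (S1 hγ hx hn (j+1) c),
      tsum_mul_left]
    rfl
  -- q * (r + c) = c
  have hqrc : q * (r + c) = c := by
    rw [hq, hrdef, hc]
    field_simp
  -- combine
  have comb : M n (m+1) γ x + c * M n m γ x
      = ∑ j ∈ Finset.range (m+1), (m.choose j : ℝ) *
          (c * M n j γ x + q * M n (j+1) γ x) := by
    rw [← lhs_split, key, rhs_exp]
    apply Finset.sum_congr rfl
    intro j hj
    have : q * ((r + c) * M n j γ x + M n (j+1) γ x)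
        = (q * (r + c)) * M n j γ x + q * M n (j+1) γ x := by ring
    rw [this, hqrc]
  rw [Finset.sum_range_succ, Nat.choose_self] at comb
  have hq1 : 1 - q = (1 + γ * x)⁻¹ := by
    rw [hq]; field_simp; ring
  -- (1 - q) * M_{m+1} = sum
  have final : (1 - q) * M n (m+1) γ x = ∑ j ∈ Finset.range m, (m.choose j : ℝ) *
      (c * M n j γ x + q * M n (j+1) γ x) := by
    push_cast at comb
    linarith [comb]
  have := congrArg (fun y => (1 + γ * x) * y) final
  rw [← mul_assoc, hq1, mul_inv_cancel₀ hb.ne', one_mul] at this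
  rw [this]

lemma M_bound (hγ : 0 < γ) (hx : 0 ≤ x) (m : ℕ) :
    ∃ C : ℝ, 0 < C ∧ ∀ i ≤ m, ∀ n : ℝ, 1 ≤ n → |M n i γ x| ≤ C * n ^ (i / 2) := by
  induction m with
  | zero =>
    refine ⟨1, one_pos, ?_⟩
    intro i hi n hn
    have hn0 : (0:ℝ) < n := lt_of_lt_of_le one_pos hn
    have hi0 : i = 0 := Nat.le_zero.mp hi
    subst hi0
    rw [M_zero hγ hx hn0]
    norm_num
  | succ m ih =>
    obtain ⟨C, hC, hCb⟩ := ih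
    refine ⟨C * (1 + (1 + γ * x) * (x + 1) * 2 ^ m), by positivity, ?_⟩
    intro i hi n hn
    have hn0 : (0:ℝ) < n := lt_of_lt_of_le one_pos hn
    have hfac : (1:ℝ) ≤ 1 + (1 + γ * x) * (x + 1) * 2 ^ m := by
      have h9 : (0:ℝ) ≤ (1 + γ * x) * (x + 1) * 2 ^ m := by positivity
      linarith
    by_cases hi' : i ≤ m
    · calc |M n i γ x| ≤ C * n ^ (i / 2) := hCb i hi' n hn
        _ ≤ C * (1 + (1 + γ * x) * (x + 1) * 2 ^ m) * n ^ (i / 2) := by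
            apply mul_le_mul_of_nonneg_right _ (by positivity)
            exact le_mul_of_one_le_right hC.le hfac
    · have hieq : i = m + 1 := by omega
      subst hieq
      have hb : (0:ℝ) < 1 + γ * x := by positivity
      have hq0 : (0:ℝ) ≤ γ * x / (1 + γ * x) := by positivity
      have hq1 : γ * x / (1 + γ * x) ≤ 1 := by
        rw [div_le_one hb]; linarith
      rw [M_rec hγ hx hn0 m]
      have term_bound : ∀ j ∈ Finset.range m,
          |(m.choose j : ℝ) * (n * x * M n j γ x + (γ * x / (1 + γ * x)) * M n (j+1) γ x)|
            ≤ (m.choose j : ℝ) * (C * (x + 1) * n ^ ((m+1) / 2)) := by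
        intro j hj
        have hjm : j < m := Finset.mem_range.mp hj
        have hMj := hCb j (by omega) n hn
        have hMj1 := hCb (j+1) (by omega) n hn
        rw [abs_mul, Nat.abs_cast]
        apply mul_le_mul_of_nonneg_left _ (Nat.cast_nonneg _)
        have h1 : |n * x * M n j γ x| ≤ x * C * n ^ ((m+1) / 2) := by
          rw [abs_mul, abs_of_nonneg (by positivity : (0:ℝ) ≤ n * x)]
          have e1 : n ^ (j / 2 + 1) ≤ n ^ ((m+1) / 2) :=
            pow_le_pow_right₀ hn (by omega)
          calc n * x * |M n j γ x| ≤ n * x * (C * n ^ (j / 2)) := by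
                apply mul_le_mul_of_nonneg_left hMj (by positivity)
            _ = x * C * n ^ (j / 2 + 1) := by rw [pow_succ]; ring
            _ ≤ x * C * n ^ ((m+1) / 2) := by
                apply mul_le_mul_of_nonneg_left e1 (by positivity)
        have h2 : |(γ * x / (1 + γ * x)) * M n (j+1) γ x| ≤ C * n ^ ((m+1) / 2) := by
          rw [abs_mul, abs_of_nonneg hq0]
          have e2 : n ^ ((j+1) / 2) ≤ n ^ ((m+1) / 2) :=
            pow_le_pow_right₀ hn (by omega)
          calc (γ * x / (1 + γ * x)) * |M n (j+1) γ x|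
              ≤ 1 * (C * n ^ ((j+1) / 2)) := by
                apply mul_le_mul hq1 hMj1 (abs_nonneg _) one_pos.le
            _ = C * n ^ ((j+1) / 2) := one_mul _
            _ ≤ C * n ^ ((m+1) / 2) := by
                apply mul_le_mul_of_nonneg_left e2 hC.le
        calc |n * x * M n j γ x + (γ * x / (1 + γ * x)) * M n (j+1) γ x|
            ≤ |n * x * M n j γ x| + |(γ * x / (1 + γ * x)) * M n (j+1) γ x| := abs_add_le _ _
          _ ≤ x * C * n ^ ((m+1) / 2) + C * n ^ ((m+1) / 2) := add_le_add h1 h2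
          _ = C * (x + 1) * n ^ ((m+1) / 2) := by ring
      have hchoose : (∑ j ∈ Finset.range m, (m.choose j : ℝ)) ≤ 2 ^ m := by
        have h1 : (∑ j ∈ Finset.range m, m.choose j) ≤ ∑ j ∈ Finset.range (m+1), m.choose j :=
          Finset.sum_le_sum_of_subset (Finset.range_subset_range.mpr (by omega))
        rw [Nat.sum_range_choose] at h1
        exact_mod_cast h1
      calc |(1 + γ * x) * ∑ j ∈ Finset.range m, (m.choose j : ℝ) *
              (n * x * M n j γ x + (γ * x / (1 + γ * x)) * M n (j+1) γ x)|
          = (1 + γ * x) * |∑ j ∈ Finset.range m, (m.choose j : ℝ) *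
              (n * x * M n j γ x + (γ * x / (1 + γ * x)) * M n (j+1) γ x)| := by
            rw [abs_mul, abs_of_pos hb]
        _ ≤ (1 + γ * x) * ∑ j ∈ Finset.range m, (m.choose j : ℝ) *
              (C * (x + 1) * n ^ ((m+1) / 2)) := by
            apply mul_le_mul_of_nonneg_left _ hb.le
            exact le_trans (Finset.abs_sum_le_sum_abs _ _) (Finset.sum_le_sum term_bound)
        _ = (1 + γ * x) * (C * (x + 1) * n ^ ((m+1) / 2))
              * (∑ j ∈ Finset.range m, (m.choose j : ℝ)) := by
            rw [← Finset.sum_mul]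
            ring
        _ ≤ (1 + γ * x) * (C * (x + 1) * n ^ ((m+1) / 2)) * 2 ^ m := by
            apply mul_le_mul_of_nonneg_left hchoose (by positivity)
        _ ≤ C * (1 + (1 + γ * x) * (x + 1) * 2 ^ m) * n ^ ((m+1) / 2) := by
            have hpow : (0:ℝ) ≤ n ^ ((m+1) / 2) := by positivity
            nlinarith [mul_nonneg (mul_nonneg hb.le (by positivity : (0:ℝ) ≤ C * (x+1))) hpow]

end main

theorem baskakov_central_moment_order (γ x : ℝ) (m : ℕ) (hx : 0 ≤ x) (hγ : 0 < γ) :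
    ∃ C > 0, ∀ᶠ n : ℝ in atTop,
      |U n m γ x| ≤ C * n ^ (-(⌊((m : ℝ) + 1) / 2⌋ : ℝ)) := by
  obtain ⟨C, hC, hCb⟩ := M_bound hγ hx m
  refine ⟨C, hC, ?_⟩
  filter_upwards [eventually_ge_atTop (1:ℝ)] with n hn
  have hn0 : (0:ℝ) < n := lt_of_lt_of_le one_pos hn
  -- compute the floor
  have hfl : ⌊((m : ℝ) + 1) / 2⌋ = (((m+1) / 2 : ℕ) : ℤ) := by
    rw [Int.floor_eq_iff]
    have h1 : 2 * ((m+1) / 2) ≤ m + 1 := by omega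
    have h2 : m + 1 < 2 * ((m+1) / 2) + 2 := by omega
    have h1' : 2 * (((m+1) / 2 : ℕ) : ℝ) ≤ (m : ℝ) + 1 := by exact_mod_cast h1
    have h2' : (m : ℝ) + 1 < 2 * (((m+1) / 2 : ℕ) : ℝ) + 2 := by exact_mod_cast h2
    have ecast : (((((m+1) / 2 : ℕ) : ℤ)) : ℝ) = (((m+1) / 2 : ℕ) : ℝ) := Int.cast_natCast _
    constructor
    · rw [ecast]; linarith
    · rw [ecast]; linarith
  have hrp : n ^ (-(⌊((m : ℝ) + 1) / 2⌋ : ℝ)) = (n ^ ((m+1) / 2 : ℕ))⁻¹ := by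
    rw [hfl, ← Int.cast_neg, Real.rpow_intCast, zpow_neg, zpow_natCast]
  -- rewrite U in terms of M
  have hU : U n m γ x = M n m γ x * (n ^ m)⁻¹ := by
    unfold U M
    rw [← tsum_mul_right]
    apply tsum_congr
    intro k
    have e : (k : ℝ) / n - x = ((k : ℝ) - n * x) / n := by field_simp
    rw [e, div_pow, div_eq_mul_inv]
    ring
  have hM := hCb m le_rfl n hn
  have epow : n ^ (m : ℕ) = n ^ (m / 2) * n ^ ((m+1) / 2) := by
    rw [← pow_add]
    congr 1
    omega
  have ecancel : n ^ (m / 2) * (n ^ (m : ℕ))⁻¹ = (n ^ ((m+1) / 2))⁻¹ := by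
    rw [epow, mul_inv, ← mul_assoc, mul_inv_cancel₀ (by positivity), one_mul]
  rw [hU, hrp, abs_mul, abs_inv, abs_pow, abs_of_pos hn0]
  calc |M n m γ x| * (n ^ m)⁻¹ ≤ (C * n ^ (m / 2)) * (n ^ m)⁻¹ := by
        apply mul_le_mul_of_nonneg_right hM (by positivity)
    _ = C * (n ^ (m / 2) * (n ^ (m : ℕ))⁻¹) := by ring
    _ = C * (n ^ ((m+1) / 2))⁻¹ := by rw [ecancel]
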